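/- For every irrational x ∈ (0,1), the principal convergents of the odd-odd continued fraction of x satisfy |x − p_n/q_n| < 2/q_n for every n ≥ 1, and consequently p_n/q_n → x as n → ∞. -/

import Mathlib

/-- The odd-odd continued fraction map on `[0,1]`.  For `x ∈ [(k-1)/k, k/(k+1))` with `k ≥ 1`
one has `k = ⌊1/(1-x)⌋`, and the two branches are separated by `(2k-1)/(2k+1)`. -/
noncomputable def oocfT (x : ℝ) : ℝ :=
  if x = 1 then 1
  else if x < (2 * (⌊1 / (1 - x)⌋ : ℝ) - 1) / (2 * (⌊1 / (1 - x)⌋ : ℝ) + 1) then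
    ((⌊1 / (1 - x)⌋ : ℝ) * x - ((⌊1 / (1 - x)⌋ : ℝ) - 1)) /
      ((⌊1 / (1 - x)⌋ : ℝ) - ((⌊1 / (1 - x)⌋ : ℝ) + 1) * x)
  else
    ((⌊1 / (1 - x)⌋ : ℝ) - ((⌊1 / (1 - x)⌋ : ℝ) + 1) * x) /
      ((⌊1 / (1 - x)⌋ : ℝ) * x - ((⌊1 / (1 - x)⌋ : ℝ) - 1))

/-- OOCF partial quotient `a` of a point `y`: `a = k+1` if `y` is in the lower branch
interval `((k-1)/k, (2k-1)/(2k+1))`, and `a = k` if `y ∈ ((2k-1)/(2k+1), k/(k+1))`,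
where `k = ⌊1/(1-y)⌋`. -/
noncomputable def oocfA (y : ℝ) : ℤ :=
  if y < (2 * (⌊1 / (1 - y)⌋ : ℝ) - 1) / (2 * (⌊1 / (1 - y)⌋ : ℝ) + 1) then ⌊1 / (1 - y)⌋ + 1
  else ⌊1 / (1 - y)⌋

/-- OOCF partial quotient `ε` of a point `y`: `ε = -1` on the lower branch interval and
`ε = 1` on the upper one. -/
noncomputable def oocfE (y : ℝ) : ℤ :=
  if y < (2 * (⌊1 / (1 - y)⌋ : ℝ) - 1) / (2 * (⌊1 / (1 - y)⌋ : ℝ) + 1) then -1 else 1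

/-- The OOCF convergents `(p'_n, q'_n, p_n, q_n)` of `x`, defined by
`p'_0 = 1, q'_0 = 0, p_0 = 1, q_0 = 1` and
`p'_n = a_n p_{n-1} - p'_{n-1}`, `q'_n = a_n q_{n-1} - q'_{n-1}`,
`p_n = 2 p'_n + ε_n p_{n-1}`, `q_n = 2 q'_n + ε_n q_{n-1}`,
where `(a_n, ε_n)` are the partial quotients of `x`, i.e. `a_n = oocfA (oocfT^[n-1] x)`,
`ε_n = oocfE (oocfT^[n-1] x)`. -/
noncomputable def oocfConv (x : ℝ) : ℕ → ℤ × ℤ × ℤ × ℤ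
  | 0 => (1, 0, 1, 1)
  | n + 1 =>
    let c := oocfConv x n
    (oocfA (oocfT^[n] x) * c.2.2.1 - c.1,
     oocfA (oocfT^[n] x) * c.2.2.2 - c.2.1,
     2 * (oocfA (oocfT^[n] x) * c.2.2.1 - c.1) + oocfE (oocfT^[n] x) * c.2.2.1,
     2 * (oocfA (oocfT^[n] x) * c.2.2.2 - c.2.1) + oocfE (oocfT^[n] x) * c.2.2.2)

/-- `n`-th sub-convergent numerator `p'_n`. -/
noncomputable def oocfP' (x : ℝ) (n : ℕ) : ℤ := (oocfConv x n).1

/-- `n`-th sub-convergent denominator `q'_n`. -/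
noncomputable def oocfQ' (x : ℝ) (n : ℕ) : ℤ := (oocfConv x n).2.1

/-- `n`-th principal convergent numerator `p_n`. -/
noncomputable def oocfP (x : ℝ) (n : ℕ) : ℤ := (oocfConv x n).2.2.1

/-- `n`-th principal convergent denominator `q_n`. -/
noncomputable def oocfQ (x : ℝ) (n : ℕ) : ℤ := (oocfConv x n).2.2.2

/-- `n`-th pseudo-convergent numerator: `p''_n = p'_n + ε_n p_{n-1}` for `n ≥ 1`
(with the convention `p''_0 = 0`). -/
noncomputable def oocfP'' (x : ℝ) : ℕ → ℤ
  | 0 => 0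
  | n + 1 => oocfP' x (n + 1) + oocfE (oocfT^[n] x) * oocfP x n

/-- `n`-th pseudo-convergent denominator: `q''_n = q'_n + ε_n q_{n-1}` for `n ≥ 1`
(with the convention `q''_0 = 1`). -/
noncomputable def oocfQ'' (x : ℝ) : ℕ → ℤ
  | 0 => 1
  | n + 1 => oocfQ' x (n + 1) + oocfE (oocfT^[n] x) * oocfQ x n

lemma oocfP'_succ (x : ℝ) (n : ℕ) :
    oocfP' x (n+1) = oocfA (oocfT^[n] x) * oocfP x n - oocfP' x n := rfl
lemma oocfQ'_succ (x : ℝ) (n : ℕ) :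
    oocfQ' x (n+1) = oocfA (oocfT^[n] x) * oocfQ x n - oocfQ' x n := rfl
lemma oocfP_succ (x : ℝ) (n : ℕ) :
    oocfP x (n+1) = 2 * oocfP' x (n+1) + oocfE (oocfT^[n] x) * oocfP x n := rfl
lemma oocfQ_succ (x : ℝ) (n : ℕ) :
    oocfQ x (n+1) = 2 * oocfQ' x (n+1) + oocfE (oocfT^[n] x) * oocfQ x n := rfl
lemma oocfP''_succ (x : ℝ) (n : ℕ) :
    oocfP'' x (n+1) = oocfP' x (n+1) + oocfE (oocfT^[n] x) * oocfP x n := rfl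
lemma oocfQ''_succ (x : ℝ) (n : ℕ) :
    oocfQ'' x (n+1) = oocfQ' x (n+1) + oocfE (oocfT^[n] x) * oocfQ x n := rfl

lemma irr_ne_div {y : ℝ} (h : Irrational y) (m n : ℤ) : y ≠ (m:ℝ)/(n:ℝ) := by
  intro he
  exact h ⟨(m:ℚ)/(n:ℚ), by push_cast; exact he.symm⟩

lemma irr_moebius {y t : ℝ} (hirr : Irrational y) (a b c d : ℤ)
    (hD : (c:ℝ)*t + (d:ℝ) ≠ 0) (hid : y * ((c:ℝ)*t + (d:ℝ)) = (a:ℝ)*t + (b:ℝ)) :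
    Irrational t := by
  intro ht
  obtain ⟨r, hr⟩ := ht
  apply hirr
  refine ⟨((a:ℚ)*r + b)/((c:ℚ)*r + d), ?_⟩
  have hy : y = ((a:ℝ)*t + b)/((c:ℝ)*t + d) := by
    rw [eq_div_iff hD]; exact hid
  rw [hy, ← hr]
  push_cast
  ring

lemma oocf_step {y : ℝ} (hy0 : 0 < y) (hy1 : y < 1) (hirr : Irrational y) :
    0 < oocfT y ∧ oocfT y < 1 ∧ Irrational (oocfT y) ∧ 1 ≤ oocfA y ∧
      (oocfE y = 1 ∨ (oocfE y = -1 ∧ 2 ≤ oocfA y)) ∧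
      y * ((oocfA y : ℝ) * oocfT y + ((oocfA y : ℝ) + (oocfE y : ℝ))) =
        ((oocfA y : ℝ) - 1) * oocfT y + ((oocfA y : ℝ) - 1 + (oocfE y : ℝ)) := by
  have h1y : 0 < 1 - y := by linarith
  have hk1 : 1 ≤ ⌊1/(1-y)⌋ := by
    refine Int.le_floor.mpr ?_
    rw [le_div_iff₀ h1y]; push_cast; linarith
  have hkR : (1:ℝ) ≤ (⌊1/(1-y)⌋ : ℝ) := by exact_mod_cast hk1
  have hfl : ((⌊1/(1-y)⌋ : ℤ) : ℝ) ≤ 1/(1-y) := Int.floor_le _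
  have hfu : 1/(1-y) < (⌊1/(1-y)⌋ : ℝ) + 1 := Int.lt_floor_add_one _
  have hne1 : y ≠ 1 := ne_of_lt hy1
  rw [oocfT, oocfA, oocfE, if_neg hne1]
  set k : ℤ := ⌊1/(1-y)⌋ with hkdef
  have hfl' : (k:ℝ) * (1-y) ≤ 1 := (le_div_iff₀ h1y).mp hfl
  have hfu' : 1 < ((k:ℝ)+1) * (1-y) := by
    rw [div_lt_iff₀ h1y] at hfu; linarith
  -- y bounds
  have hlow : ((k:ℝ)-1) < (k:ℝ) * y := by
    have hle : ((k:ℝ)-1)/(k:ℝ) ≤ y := by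
      rw [div_le_iff₀ (by linarith : (0:ℝ) < (k:ℝ))]; nlinarith
    have hne : y ≠ ((k-1 : ℤ):ℝ)/((k:ℤ):ℝ) := irr_ne_div hirr _ _
    push_cast at hne
    have : ((k:ℝ)-1)/(k:ℝ) < y := lt_of_le_of_ne hle (fun h => hne h.symm)
    rw [div_lt_iff₀ (by linarith : (0:ℝ) < (k:ℝ))] at this; linarith
  have hup : ((k:ℝ)+1) * y < (k:ℝ) := by nlinarith
  by_cases hB : y < (2 * (k:ℝ) - 1) / (2 * (k:ℝ) + 1)
  · -- lower branch
    rw [if_pos hB, if_pos hB, if_pos hB]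
    have hd : 0 < (k:ℝ) - ((k:ℝ)+1)*y := by linarith
    have hN : 0 < (k:ℝ)*y - ((k:ℝ)-1) := by linarith
    have hB' : y * (2*(k:ℝ)+1) < 2*(k:ℝ)-1 := by
      rw [lt_div_iff₀ (by linarith : (0:ℝ) < 2*(k:ℝ)+1)] at hB; linarith
    have hT0 : 0 < ((k:ℝ)*y - ((k:ℝ)-1)) / ((k:ℝ) - ((k:ℝ)+1)*y) := div_pos hN hd
    have hT1 : ((k:ℝ)*y - ((k:ℝ)-1)) / ((k:ℝ) - ((k:ℝ)+1)*y) < 1 := by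
      rw [div_lt_one hd]; linarith
    have hid : y * (((k+1:ℤ):ℝ) * (((k:ℝ)*y - ((k:ℝ)-1)) / ((k:ℝ) - ((k:ℝ)+1)*y)) + (((k+1:ℤ):ℝ) + ((-1:ℤ):ℝ))) =
        (((k+1:ℤ):ℝ) - 1) * (((k:ℝ)*y - ((k:ℝ)-1)) / ((k:ℝ) - ((k:ℝ)+1)*y)) + (((k+1:ℤ):ℝ) - 1 + ((-1:ℤ):ℝ)) := by
      push_cast
      have hT := div_mul_cancel₀ ((k:ℝ)*y - ((k:ℝ)-1)) hd.ne'
      linear_combination (-1:ℝ) * hT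
    refine ⟨hT0, hT1, ?_, by omega, Or.inr ⟨rfl, by omega⟩, hid⟩
    · refine irr_moebius hirr k (k-1) (k+1) k ?_ ?_
      · push_cast; nlinarith
      · push_cast; push_cast at hid; linarith [hid]
  · -- upper branch
    rw [if_neg hB, if_neg hB, if_neg hB]
    have hd : 0 < (k:ℝ) - ((k:ℝ)+1)*y := by linarith
    have hN : 0 < (k:ℝ)*y - ((k:ℝ)-1) := by linarith
    have hBge : (2 * (k:ℝ) - 1) / (2 * (k:ℝ) + 1) ≤ y := not_lt.mp hB
    have hBne : y ≠ ((2*k-1 : ℤ):ℝ)/((2*k+1:ℤ):ℝ) := irr_ne_div hirr _ _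
    push_cast at hBne
    have hBgt : (2 * (k:ℝ) - 1) / (2 * (k:ℝ) + 1) < y :=
      lt_of_le_of_ne hBge (fun h => hBne h.symm)
    have hB' : 2*(k:ℝ)-1 < y * (2*(k:ℝ)+1) := by
      rw [div_lt_iff₀ (by linarith : (0:ℝ) < 2*(k:ℝ)+1)] at hBgt; linarith
    have hT0 : 0 < ((k:ℝ) - ((k:ℝ)+1)*y) / ((k:ℝ)*y - ((k:ℝ)-1)) := div_pos hd hN
    have hT1 : ((k:ℝ) - ((k:ℝ)+1)*y) / ((k:ℝ)*y - ((k:ℝ)-1)) < 1 := by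
      rw [div_lt_one hN]; linarith
    have hid : y * (((k:ℤ):ℝ) * (((k:ℝ) - ((k:ℝ)+1)*y) / ((k:ℝ)*y - ((k:ℝ)-1))) + (((k:ℤ):ℝ) + ((1:ℤ):ℝ))) =
        (((k:ℤ):ℝ) - 1) * (((k:ℝ) - ((k:ℝ)+1)*y) / ((k:ℝ)*y - ((k:ℝ)-1))) + (((k:ℤ):ℝ) - 1 + ((1:ℤ):ℝ)) := by
      push_cast
      have hT := div_mul_cancel₀ ((k:ℝ) - ((k:ℝ)+1)*y) hN.ne'
      linear_combination hT
    refine ⟨hT0, hT1, ?_, hk1, Or.inl rfl, hid⟩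
    · refine irr_moebius hirr (k-1) k k (k+1) ?_ ?_
      · push_cast; nlinarith
      · push_cast; push_cast at hid; linarith [hid]


lemma oocf_main (x : ℝ) (hx0 : 0 < x) (hx1 : x < 1) (hirr : Irrational x) :
    ∀ n : ℕ,
      0 < oocfT^[n] x ∧ oocfT^[n] x < 1 ∧ Irrational (oocfT^[n] x) ∧
      0 ≤ oocfQ' x n ∧ 1 ≤ oocfQ'' x n ∧
      oocfQ x n = oocfQ' x n + oocfQ'' x n ∧
      oocfP x n = oocfP' x n + oocfP'' x n ∧
      2 * (n:ℤ) + 1 ≤ oocfQ x n ∧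
      (oocfP' x n * oocfQ'' x n - oocfP'' x n * oocfQ' x n = 1 ∨
        oocfP' x n * oocfQ'' x n - oocfP'' x n * oocfQ' x n = -1) ∧
      x * ((oocfQ' x n : ℝ) * oocfT^[n] x + (oocfQ'' x n : ℝ)) =
        (oocfP' x n : ℝ) * oocfT^[n] x + (oocfP'' x n : ℝ) := by
  intro n
  induction n with
  | zero =>
    refine ⟨by simpa using hx0, by simpa using hx1, by simpa using hirr, ?_⟩
    have h1 : oocfQ' x 0 = 0 := rfl
    have h2 : oocfQ'' x 0 = 1 := rfl
    have h3 : oocfQ x 0 = 1 := rfl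
    have h4 : oocfP x 0 = 1 := rfl
    have h5 : oocfP' x 0 = 1 := rfl
    have h6 : oocfP'' x 0 = 0 := rfl
    rw [h1, h2, h3, h4, h5, h6]
    norm_num
  | succ n ih =>
    obtain ⟨ht0, ht1, htirr, hQ'0, hQ''1, hQsum, hPsum, hQgrow, hdet, hid⟩ := ih
    obtain ⟨hs0, hs1, hsirr, hA1, hEcase, hsid⟩ := oocf_step ht0 ht1 htirr
    have hiter : oocfT^[n+1] x = oocfT (oocfT^[n] x) := Function.iterate_succ_apply' _ _ _
    have hq'succ := oocfQ'_succ x n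
    have hqsucc := oocfQ_succ x n
    have hq''succ := oocfQ''_succ x n
    have hp'succ := oocfP'_succ x n
    have hpsucc := oocfP_succ x n
    have hp''succ := oocfP''_succ x n
    set t : ℝ := oocfT^[n] x with htdef
    set A : ℤ := oocfA t with hAdef
    set E : ℤ := oocfE t with hEdef
    set t' : ℝ := oocfT t with ht'def
    rw [hiter]
    have hEsq : E = 1 ∨ E = -1 := by
      rcases hEcase with h | h
      exacts [Or.inl h, Or.inr h.1]
    have hQ1 : 1 ≤ oocfQ x n := by omega
    have hQ0 : (0:ℤ) ≤ oocfQ x n := by omega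
    have hq'new : oocfQ'' x n ≤ oocfQ' x (n+1) := by
      rw [hq'succ]; nlinarith [mul_le_mul_of_nonneg_right hA1 hQ0]
    have hq''new : 1 ≤ oocfQ'' x (n+1) := by
      rw [hq''succ, hq'succ]
      rcases hEcase with hE | ⟨hE, hA2⟩
      · rw [hE]; nlinarith [mul_le_mul_of_nonneg_right hA1 hQ0]
      · rw [hE]; nlinarith [mul_le_mul_of_nonneg_right hA2 hQ0]
    have hQsum' : oocfQ x (n+1) = oocfQ' x (n+1) + oocfQ'' x (n+1) := by
      rw [hqsucc, hq''succ]; ring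
    have hPsum' : oocfP x (n+1) = oocfP' x (n+1) + oocfP'' x (n+1) := by
      rw [hpsucc, hp''succ]; ring
    have hQgrow' : 2 * ((n:ℤ)+1) + 1 ≤ oocfQ x (n+1) := by
      rw [hqsucc, hq'succ]
      rcases hEcase with hE | ⟨hE, hA2⟩
      · rw [hE]; nlinarith [mul_le_mul_of_nonneg_right hA1 hQ0]
      · rw [hE]; nlinarith [mul_le_mul_of_nonneg_right hA2 hQ0]
    have hdet' : oocfP' x (n+1) * oocfQ'' x (n+1) - oocfP'' x (n+1) * oocfQ' x (n+1) =
        -E * (oocfP' x n * oocfQ'' x n - oocfP'' x n * oocfQ' x n) := by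
      rw [hq''succ, hp''succ, hp'succ, hq'succ, hPsum, hQsum]; ring
    have hD : (0:ℝ) < (A:ℝ) * t' + ((A:ℝ) + (E:ℝ)) := by
      have hA1R : (1:ℝ) ≤ (A:ℝ) := by exact_mod_cast hA1
      rcases hEcase with hE | ⟨hE, hA2⟩
      · rw [hE]; push_cast; nlinarith
      · have h2R : (2:ℝ) ≤ (A:ℝ) := by exact_mod_cast hA2
        rw [hE]; push_cast; nlinarith
    have hidnew : x * ((oocfQ' x (n+1) : ℝ) * t' + (oocfQ'' x (n+1) : ℝ)) =
        (oocfP' x (n+1) : ℝ) * t' + (oocfP'' x (n+1) : ℝ) := by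
      rw [hq''succ, hp''succ, hq'succ, hp'succ, hQsum, hPsum]
      push_cast
      linear_combination ((A:ℝ)*t' + ((A:ℝ)+(E:ℝ))) * hid +
        ((oocfP' x n : ℝ) - x*(oocfQ' x n : ℝ)) * hsid
    exact ⟨hs0, hs1, hsirr, by omega, hq''new, hQsum', hPsum',
      by push_cast at hQgrow' ⊢; linarith,
      by rcases hEsq with h | h <;> rcases hdet with h2 | h2 <;> rw [hdet', h, h2] <;> norm_num,
      hidnew⟩


/-- For irrational `x ∈ (0,1)`, `|x - p_n/q_n| < 2/q_n` for all `n ≥ 1`, and the OOCF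
principal convergents converge to `x`. -/
theorem oocf_convergence
    (x : ℝ) (hx : x ∈ Set.Ioo (0 : ℝ) 1) (hirr : Irrational x) :
    (∀ n : ℕ, 1 ≤ n →
        |x - (oocfP x n : ℝ) / (oocfQ x n : ℝ)| < 2 / (oocfQ x n : ℝ)) ∧
      Filter.Tendsto (fun n => (oocfP x n : ℝ) / (oocfQ x n : ℝ))
        Filter.atTop (nhds x) := by
  obtain ⟨hx0, hx1⟩ := hx
  have main := oocf_main x hx0 hx1 hirr
  have key : ∀ n : ℕ, |x - (oocfP x n : ℝ) / (oocfQ x n : ℝ)| < 2 / (oocfQ x n : ℝ) ∧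
      (oocfQ x n : ℝ) ≥ 2 * n + 1 := by
    intro n
    obtain ⟨ht0, ht1, _, hQ'0, hQ''1, hQsum, hPsum, hQgrow, hdet, hid⟩ := main n
    set t : ℝ := oocfT^[n] x with htdef
    have hq'R : (0:ℝ) ≤ (oocfQ' x n : ℝ) := by exact_mod_cast hQ'0
    have hq''R : (1:ℝ) ≤ (oocfQ'' x n : ℝ) := by exact_mod_cast hQ''1
    have hqR : (oocfQ x n : ℝ) = (oocfQ' x n : ℝ) + (oocfQ'' x n : ℝ) := by exact_mod_cast hQsum
    have hpR : (oocfP x n : ℝ) = (oocfP' x n : ℝ) + (oocfP'' x n : ℝ) := by exact_mod_cast hPsum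
    have hgrowR : (2 * (n:ℝ) + 1) ≤ (oocfQ x n : ℝ) := by exact_mod_cast hQgrow
    have hq1 : (1:ℝ) ≤ (oocfQ x n : ℝ) := by
      have : (0:ℝ) ≤ 2 * (n:ℝ) := by positivity
      linarith
    have hq0 : (0:ℝ) < (oocfQ x n : ℝ) := by linarith
    have hD1 : (1:ℝ) ≤ (oocfQ' x n : ℝ) * t + (oocfQ'' x n : ℝ) := by nlinarith
    have hD0 : (0:ℝ) < (oocfQ' x n : ℝ) * t + (oocfQ'' x n : ℝ) := by linarith
    have hdiff : x - (oocfP x n : ℝ) / (oocfQ x n : ℝ) =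
        ((t - 1) * ((oocfP' x n : ℝ) * (oocfQ'' x n : ℝ) - (oocfP'' x n : ℝ) * (oocfQ' x n : ℝ))) /
          (((oocfQ' x n : ℝ) * t + (oocfQ'' x n : ℝ)) * (oocfQ x n : ℝ)) := by
      rw [eq_div_iff (ne_of_gt (mul_pos hD0 hq0))]
      have expand : (x - (oocfP x n : ℝ) / (oocfQ x n : ℝ)) *
          (((oocfQ' x n : ℝ) * t + (oocfQ'' x n : ℝ)) * (oocfQ x n : ℝ)) =
          (x * ((oocfQ' x n : ℝ) * t + (oocfQ'' x n : ℝ))) * (oocfQ x n : ℝ) -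
            (oocfP x n : ℝ) * ((oocfQ' x n : ℝ) * t + (oocfQ'' x n : ℝ)) := by
        field_simp
      rw [expand, hid, hpR, hqR]
      ring
    have habsδ : |(oocfP' x n : ℝ) * (oocfQ'' x n : ℝ) - (oocfP'' x n : ℝ) * (oocfQ' x n : ℝ)| = 1 := by
      have : ((oocfP' x n * oocfQ'' x n - oocfP'' x n * oocfQ' x n : ℤ) : ℝ) =
          (oocfP' x n : ℝ) * (oocfQ'' x n : ℝ) - (oocfP'' x n : ℝ) * (oocfQ' x n : ℝ) := by
        push_cast; ring
      rw [← this]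
      rcases hdet with h | h <;> rw [h] <;> norm_num
    have habs : |x - (oocfP x n : ℝ) / (oocfQ x n : ℝ)| =
        (1 - t) / (((oocfQ' x n : ℝ) * t + (oocfQ'' x n : ℝ)) * (oocfQ x n : ℝ)) := by
      rw [hdiff, abs_div, abs_mul, habsδ, abs_of_neg (show t - 1 < 0 by linarith),
        abs_of_pos (mul_pos hD0 hq0)]
      ring
    constructor
    · rw [habs, div_lt_div_iff₀ (by positivity) hq0]
      nlinarith
    · exact hgrowR
  refine ⟨fun n _ => (key n).1, ?_⟩
  have hb : ∀ n : ℕ, |(oocfP x n : ℝ) / (oocfQ x n : ℝ) - x| ≤ 2 / (2 * (n:ℝ) + 1) := by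
    intro n
    obtain ⟨h1, h2⟩ := key n
    have hpos : (0:ℝ) < 2 * (n:ℝ) + 1 := by positivity
    have : 2 / (oocfQ x n : ℝ) ≤ 2 / (2 * (n:ℝ) + 1) :=
      div_le_div_of_nonneg_left (by norm_num) hpos (by linarith)
    rw [abs_sub_comm]
    linarith
  have hlim : Filter.Tendsto (fun n : ℕ => 2 / (2 * (n:ℝ) + 1)) Filter.atTop (nhds 0) := by
    apply Filter.Tendsto.div_atTop (tendsto_const_nhds)
    apply Filter.tendsto_atTop_add_const_right
    exact (tendsto_natCast_atTop_atTop (R := ℝ)).const_mul_atTop (by norm_num)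
  have habs0 : Filter.Tendsto (fun n : ℕ => |(oocfP x n : ℝ) / (oocfQ x n : ℝ) - x|)
      Filter.atTop (nhds 0) :=
    squeeze_zero (fun n => abs_nonneg _) hb hlim
  have hsub : Filter.Tendsto (fun n : ℕ => (oocfP x n : ℝ) / (oocfQ x n : ℝ) - x)
      Filter.atTop (nhds 0) := by
    exact (tendsto_zero_iff_abs_tendsto_zero _).mpr habs0
  have := hsub.add_const x
  simpa using this
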